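/- Let N ≥ 2 be an integer, let L > 0 with L ∉ 𝒩*, and let λ ∈ ℂ. Suppose φ₁, …, φ_N : ℝ → ℂ each satisfy the KdV spectral ODE with parameter λ on [0,L], with the boundary conditions φ_j(0) = φ₁(0) for all j, Σ_{j=1}^N φ_j''(0) = 0, and φ_j(L) = 0, φ_j'(0) = 0, φ_j''(L) = 0 for all j. Then Σ_{j=1}^N φ_j vanishes identically on [0,L] if and only if every φ_j vanishes identically on [0,L]. -/

import Mathlib

/-- A function `φ : ℝ → ℂ` satisfies the KdV spectral ODE with parameter `lam` on `[0, L]`: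
it is three times continuously differentiable and `lam·φ + φ' + φ''' = 0` on `[0, L]`. -/
def KdVSpectralODE (lam : ℂ) (L : ℝ) (φ : ℝ → ℂ) : Prop :=
  ContDiff ℝ 3 φ ∧
    ∀ x ∈ Set.Icc (0 : ℝ) L, lam * φ x + deriv φ x + iteratedDeriv 3 φ x = 0

/-- The critical set 𝒩* of Glass and Guerrero. -/
def criticalNStar : Set ℝ :=
  {L : ℝ | 0 < L ∧ ∃ a b : ℂ,
    a * Complex.exp a = b * Complex.exp b ∧
    b * Complex.exp b = -(a + b) * Complex.exp (-(a + b)) ∧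
    (L : ℂ) ^ 2 = -(a ^ 2 + a * b + b ^ 2)}

section KdVAux
open Complex Set


open Complex Set

noncomputable def eSol (a b r : ℂ) (x : ℝ) : ℂ := (a + b * x) * Complex.exp (r * x)

lemma eSol_hasDerivAt (a b r : ℂ) (x : ℝ) :
    HasDerivAt (eSol a b r) (eSol (a * r + b) (b * r) r x) x := by
  have hx : HasDerivAt (fun x : ℝ => (x : ℂ)) 1 x := by
    simpa using (hasDerivAt_id x).ofReal_comp
  have h1 : HasDerivAt (fun x : ℝ => a + b * (x : ℂ)) b x := by
    simpa using (hx.const_mul b).const_add a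
  have h2 : HasDerivAt (fun x : ℝ => Complex.exp (r * x)) (Complex.exp (r * x) * r) x := by
    simpa using (hx.const_mul r).cexp
  have := h1.mul h2
  convert this using 1
  · rfl
  · rfl
  · simp [eSol]; ring

lemma eSol_contDiff (a b r : ℂ) : ContDiff ℝ 3 (eSol a b r) := by
  have hx : ContDiff ℝ 3 (fun x : ℝ => (x : ℂ)) := Complex.ofRealCLM.contDiff
  exact (contDiff_const.add (contDiff_const.mul hx)).mul
    ((Complex.contDiff_exp (𝕜 := ℝ)).comp (contDiff_const.mul hx))

lemma deriv_eSol (a b r : ℂ) : deriv (eSol a b r) = eSol (a * r + b) (b * r) r :=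
  funext fun x => (eSol_hasDerivAt a b r x).deriv

noncomputable def sol3 (a₁ b₁ r₁ a₂ b₂ r₂ a₃ b₃ r₃ : ℂ) (x : ℝ) : ℂ :=
  eSol a₁ b₁ r₁ x + eSol a₂ b₂ r₂ x + eSol a₃ b₃ r₃ x

lemma sol3_contDiff (a₁ b₁ r₁ a₂ b₂ r₂ a₃ b₃ r₃ : ℂ) :
    ContDiff ℝ 3 (sol3 a₁ b₁ r₁ a₂ b₂ r₂ a₃ b₃ r₃) :=
  ((eSol_contDiff a₁ b₁ r₁).add (eSol_contDiff a₂ b₂ r₂)).add (eSol_contDiff a₃ b₃ r₃)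

lemma deriv_sol3 (a₁ b₁ r₁ a₂ b₂ r₂ a₃ b₃ r₃ : ℂ) :
    deriv (sol3 a₁ b₁ r₁ a₂ b₂ r₂ a₃ b₃ r₃) =
      sol3 (a₁*r₁+b₁) (b₁*r₁) r₁ (a₂*r₂+b₂) (b₂*r₂) r₂ (a₃*r₃+b₃) (b₃*r₃) r₃ := by
  funext x
  exact ((((eSol_hasDerivAt a₁ b₁ r₁ x).add (eSol_hasDerivAt a₂ b₂ r₂ x)).add
    (eSol_hasDerivAt a₃ b₃ r₃ x))).deriv

lemma iteratedDeriv_two_sol3 (a₁ b₁ r₁ a₂ b₂ r₂ a₃ b₃ r₃ : ℂ) :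
    iteratedDeriv 2 (sol3 a₁ b₁ r₁ a₂ b₂ r₂ a₃ b₃ r₃) =
      sol3 (a₁*r₁^2+2*b₁*r₁) (b₁*r₁^2) r₁ (a₂*r₂^2+2*b₂*r₂) (b₂*r₂^2) r₂
        (a₃*r₃^2+2*b₃*r₃) (b₃*r₃^2) r₃ := by
  rw [iteratedDeriv_succ, iteratedDeriv_one, deriv_sol3, deriv_sol3]
  ring_nf

lemma iteratedDeriv_three_sol3 (a₁ b₁ r₁ a₂ b₂ r₂ a₃ b₃ r₃ : ℂ) :
    iteratedDeriv 3 (sol3 a₁ b₁ r₁ a₂ b₂ r₂ a₃ b₃ r₃) =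
      sol3 (a₁*r₁^3+3*b₁*r₁^2) (b₁*r₁^3) r₁ (a₂*r₂^3+3*b₂*r₂^2) (b₂*r₂^3) r₂
        (a₃*r₃^3+3*b₃*r₃^2) (b₃*r₃^3) r₃ := by
  rw [iteratedDeriv_succ, iteratedDeriv_two_sol3, deriv_sol3]
  ring_nf

lemma sol3_kdv (lam : ℂ) (L : ℝ) (a₁ b₁ r₁ a₂ b₂ r₂ a₃ b₃ r₃ : ℂ)
    (h1 : r₁^3 + r₁ + lam = 0) (h2 : r₂^3 + r₂ + lam = 0) (h3 : r₃^3 + r₃ + lam = 0)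
    (hb1 : b₁ * (3*r₁^2+1) = 0) (hb2 : b₂ * (3*r₂^2+1) = 0) (hb3 : b₃ * (3*r₃^2+1) = 0) :
    KdVSpectralODE lam L (sol3 a₁ b₁ r₁ a₂ b₂ r₂ a₃ b₃ r₃) := by
  refine ⟨sol3_contDiff _ _ _ _ _ _ _ _ _, fun x _ => ?_⟩
  rw [deriv_sol3, iteratedDeriv_three_sol3]
  simp only [sol3, eSol]
  linear_combination Complex.exp (r₁*x) * ((a₁ + b₁*x) * h1 + hb1) +
    Complex.exp (r₂*x) * ((a₂ + b₂*x) * h2 + hb2) +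
    Complex.exp (r₃*x) * ((a₃ + b₃*x) * h3 + hb3)

noncomputable def kdvA (lam : ℂ) : (ℂ × ℂ × ℂ) →L[ℝ] (ℂ × ℂ × ℂ) :=
  ((ContinuousLinearMap.fst ℝ ℂ ℂ).comp (ContinuousLinearMap.snd ℝ ℂ (ℂ × ℂ))).prod
    ((((ContinuousLinearMap.snd ℝ ℂ ℂ).comp (ContinuousLinearMap.snd ℝ ℂ (ℂ × ℂ)))).prod
      ((-lam) • (ContinuousLinearMap.fst ℝ ℂ (ℂ × ℂ)) -
        (ContinuousLinearMap.fst ℝ ℂ ℂ).comp (ContinuousLinearMap.snd ℝ ℂ (ℂ × ℂ))))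

lemma kdvA_apply (lam : ℂ) (p : ℂ × ℂ × ℂ) :
    kdvA lam p = (p.2.1, p.2.2, -(lam * p.1) - p.2.1) := by
  simp [kdvA, ContinuousLinearMap.prod_apply, smul_eq_mul]
  try ring

/-- key uniqueness -/
lemma kdv_unique (lam : ℂ) {L : ℝ} (hL : 0 < L) {φ ψ : ℝ → ℂ}
    (hφ : KdVSpectralODE lam L φ) (hψ : KdVSpectralODE lam L ψ)
    (e0 : φ 0 = ψ 0) (e1 : deriv φ 0 = deriv ψ 0)
    (e2 : iteratedDeriv 2 φ 0 = iteratedDeriv 2 ψ 0) :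
    ∀ x ∈ Set.Icc (0:ℝ) L, φ x = ψ x ∧ iteratedDeriv 2 φ x = iteratedDeriv 2 ψ x := by
  set v : ℝ → (ℂ × ℂ × ℂ) → (ℂ × ℂ × ℂ) := fun _ p => kdvA lam p with hv
  have hlip : ∀ t, LipschitzWith ‖kdvA lam‖₊ (v t) := fun _ => (kdvA lam).lipschitz
  have key : ∀ χ : ℝ → ℂ, KdVSpectralODE lam L χ →
      (ContinuousOn (fun t => (χ t, deriv χ t, iteratedDeriv 2 χ t)) (Icc 0 L)) ∧
      ∀ t ∈ Ico (0:ℝ) L, HasDerivWithinAt (fun t => (χ t, deriv χ t, iteratedDeriv 2 χ t))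
        (v t (χ t, deriv χ t, iteratedDeriv 2 χ t)) (Ici t) t := by
    intro χ hχ
    have hd0 : Differentiable ℝ χ := hχ.1.differentiable (by norm_num)
    have hd1 : Differentiable ℝ (deriv χ) := by
      have := hχ.1.differentiable_iteratedDeriv 1 (by norm_num)
      simpa [iteratedDeriv_one] using this
    have hd2 : Differentiable ℝ (iteratedDeriv 2 χ) :=
      hχ.1.differentiable_iteratedDeriv 2 (by norm_num)
    constructor
    · exact ((hd0.continuous.prodMk (hd1.continuous.prodMk hd2.continuous))).continuousOn
    · intro t ht
      have h1 : HasDerivAt χ (deriv χ t) t := (hd0 t).hasDerivAt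
      have h2 : HasDerivAt (deriv χ) (iteratedDeriv 2 χ t) t := by
        have := (hd1 t).hasDerivAt
        rwa [show iteratedDeriv 2 χ t = deriv (deriv χ) t by
          rw [iteratedDeriv_succ, iteratedDeriv_one]]
      have h3 : HasDerivAt (iteratedDeriv 2 χ) (iteratedDeriv 3 χ t) t := by
        have := (hd2 t).hasDerivAt
        rwa [show iteratedDeriv 3 χ t = deriv (iteratedDeriv 2 χ) t by
          rw [iteratedDeriv_succ]]
      have hode := hχ.2 t ⟨ht.1, le_of_lt ht.2⟩
      have h3' : HasDerivAt (iteratedDeriv 2 χ) (-(lam * χ t) - deriv χ t) t := by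
        rwa [show -(lam * χ t) - deriv χ t = iteratedDeriv 3 χ t by linear_combination -hode]
      have := (h1.prodMk (h2.prodMk h3'))
      have hg : v t (χ t, deriv χ t, iteratedDeriv 2 χ t) =
          (deriv χ t, iteratedDeriv 2 χ t, -(lam * χ t) - deriv χ t) := by
        simp [hv, kdvA_apply]
      rw [hg]
      exact this.hasDerivWithinAt
  obtain ⟨hc1, hd1⟩ := key φ hφ
  obtain ⟨hc2, hd2⟩ := key ψ hψ
  have := ODE_solution_unique hlip hc1 hd1 hc2 hd2 (by simp [e0, e1, e2])
  intro x hx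
  have h := this hx
  exact ⟨congrArg Prod.fst h, congrArg (fun p => p.2.2) h⟩

lemma cubic_roots (lam : ℂ) : ∃ r₁ r₂ r₃ : ℂ,
    r₁ + r₂ + r₃ = 0 ∧ r₁*r₂ + r₁*r₃ + r₂*r₃ = 1 ∧ r₁*r₂*r₃ = -lam := by
  obtain ⟨r₁, hr₁⟩ := Complex.isAlgClosed.exists_root
    (p := Polynomial.X^3 + Polynomial.X + Polynomial.C lam) (by
      intro h
      have : (Polynomial.X^3 + Polynomial.X + Polynomial.C lam).degree = 3 := by
        compute_degree!
      rw [h] at this; norm_num at this)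
  have hr : r₁^3 + r₁ + lam = 0 := by
    have := hr₁
    simp [Polynomial.IsRoot, Polynomial.eval_add, Polynomial.eval_pow] at this
    linear_combination this
  obtain ⟨d, hd⟩ := Complex.isAlgClosed.exists_pow_nat_eq (-3*r₁^2 - 4) (n := 2) (by norm_num)
  refine ⟨r₁, (-r₁+d)/2, (-r₁-d)/2, by ring, by linear_combination (-1/4 : ℂ) * hd,
    by linear_combination (-r₁/4) * hd + hr⟩

lemma root_of_elem {r₁ r₂ r₃ lam : ℂ} (he1 : r₁ + r₂ + r₃ = 0)
    (he2 : r₁*r₂ + r₁*r₃ + r₂*r₃ = 1) (he3 : r₁*r₂*r₃ = -lam) :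
    r₁^3 + r₁ + lam = 0 := by
  linear_combination r₁^2 * he1 - r₁ * he2 + he3

lemma exists_double {r₁ r₂ r₃ lam : ℂ} (he1 : r₁ + r₂ + r₃ = 0)
    (he2 : r₁*r₂ + r₁*r₃ + r₂*r₃ = 1) (he3 : r₁*r₂*r₃ = -lam)
    (h : r₁ = r₂ ∨ r₁ = r₃ ∨ r₂ = r₃) :
    ∃ s : ℂ, s^2 = -1/3 ∧ lam = 2*s^3 := by
  rcases h with h | h | h
  · subst h
    refine ⟨r₁, ?_, ?_⟩
    · linear_combination (-1/3 : ℂ) * he2 + (2*r₁/3) * he1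
    · linear_combination he3 + (-r₁^2) * he1
  · subst h
    refine ⟨r₁, ?_, ?_⟩
    · linear_combination (-1/3 : ℂ) * he2 + (2*r₁/3) * he1
    · linear_combination he3 + (-r₁^2) * he1
  · subst h
    refine ⟨r₂, ?_, ?_⟩
    · linear_combination (-1/3 : ℂ) * he2 + (2*r₂/3) * he1
    · linear_combination he3 + (-r₂^2) * he1

lemma branch_distinct {L : ℝ} (hL : 0 < L) {r₁ r₂ r₃ : ℂ}
    (he1 : r₁ + r₂ + r₃ = 0) (he2 : r₁*r₂ + r₁*r₃ + r₂*r₃ = 1)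
    (h12 : r₁ ≠ r₂) (h13 : r₁ ≠ r₃) (h23 : r₂ ≠ r₃)
    (hE1 : (r₂-r₃) * Complex.exp (r₁*L) + (r₃-r₁) * Complex.exp (r₂*L)
      + (r₁-r₂) * Complex.exp (r₃*L) = 0)
    (hE2 : (r₂-r₃)*r₁^2 * Complex.exp (r₁*L) + (r₃-r₁)*r₂^2 * Complex.exp (r₂*L)
      + (r₁-r₂)*r₃^2 * Complex.exp (r₃*L) = 0) :
    L ∈ criticalNStar := by
  have h3 : r₃ = -r₁ - r₂ := by linear_combination he1
  subst h3
  set E₁ := Complex.exp (r₁*L) with hEd₁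
  set E₂ := Complex.exp (r₂*L) with hEd₂
  set E₃ := Complex.exp ((-r₁-r₂)*L) with hEd₃
  have hne1 : E₁ ≠ 0 := Complex.exp_ne_zero _
  have hne2 : E₂ ≠ 0 := Complex.exp_ne_zero _
  have hne3 : E₃ ≠ 0 := Complex.exp_ne_zero _
  have k12 : r₂ * E₁ = r₁ * E₂ := by
    have h : ((r₂-(-r₁-r₂))*((-r₁-r₂)-r₁)) * (r₂*E₁ - r₁*E₂) = 0 := by
      linear_combination hE2 - (-r₁-r₂)^2 * hE1
    rcases mul_eq_zero.mp h with h' | h'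
    · rcases mul_eq_zero.mp h' with h'' | h''
      · exact absurd (sub_eq_zero.mp h'') h23
      · exact absurd (sub_eq_zero.mp h'').symm h13
    · exact sub_eq_zero.mp h'
  have k23 : (-r₁-r₂) * E₂ = r₂ * E₃ := by
    have h : (((-r₁-r₂)-r₁)*(r₁-r₂)) * ((-r₁-r₂)*E₂ - r₂*E₃) = 0 := by
      linear_combination hE2 - r₁^2 * hE1
    rcases mul_eq_zero.mp h with h' | h'
    · rcases mul_eq_zero.mp h' with h'' | h''
      · exact absurd (sub_eq_zero.mp h'').symm h13
      · exact absurd (sub_eq_zero.mp h'') h12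
    · exact sub_eq_zero.mp h'
  have hprod : E₁ * E₂ * E₃ = 1 := by
    rw [hEd₁, hEd₂, hEd₃, ← Complex.exp_add, ← Complex.exp_add,
      show r₁*(L:ℂ) + r₂*L + (-r₁-r₂)*L = 0 by ring, Complex.exp_zero]
  simp only [criticalNStar, Set.mem_setOf_eq]
  refine ⟨hL, -(r₁*(L:ℂ)), -(r₂*(L:ℂ)), ?_, ?_, ?_⟩
  · rw [Complex.exp_neg, Complex.exp_neg, ← hEd₁, ← hEd₂]
    field_simp
    linear_combination ((L:ℂ)) * k12
  · rw [Complex.exp_neg, show -(-(r₁*(L:ℂ)) + -(r₂*(L:ℂ))) = r₁*L + r₂*L by ring,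
      Complex.exp_add, ← hEd₁, ← hEd₂]
    field_simp
    linear_combination (L:ℂ)*E₁*E₂*k23 + (L:ℂ)*r₂*hprod
  · push_cast
    linear_combination (-(L:ℂ)^2) * he2

lemma branch_repeated {L : ℝ} (hL : 0 < L) {s c : ℂ} (hs : s^2 = -1/3) (hc : c ≠ 0)
    (eqA : (c/3 - c*s*L) * Complex.exp (s*L) + (-c/3) * Complex.exp (-2*s*L) = 0)
    (eqB : (-5/3*c*s^2 - c*s^3*L) * Complex.exp (s*L)
      + (-4/3*c*s^2) * Complex.exp (-2*s*L) = 0) :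
    L ∈ criticalNStar := by
  set E := Complex.exp (s*L) with hEd
  set F := Complex.exp (-2*s*L) with hFd
  have hne : E ≠ 0 := Complex.exp_ne_zero _
  have hEF : E^2 * F = 1 := by
    rw [hEd, hFd, ← Complex.exp_nat_mul, ← Complex.exp_add,
      show (2:ℕ)*(s*(L:ℂ)) + (-2*s*L) = 0 by push_cast; ring, Complex.exp_zero]
  have h1 : (c/3 - c*s*L)*E^3 = c/3 := by
    linear_combination E^2*eqA + (c/3)*hEF
  have h2 : 2*c*E^3 + c = 0 := by
    linear_combination h1 + 3*(E^2*eqB + (4/3*c*s^2)*hEF) + (c*(5+3*s*L)*E^3 + 4*c)*hs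
  have hX : E^3 = -1/2 := by
    apply mul_left_cancel₀ hc
    linear_combination h2/2
  simp only [criticalNStar, Set.mem_setOf_eq]
  refine ⟨hL, -(s*(L:ℂ)), -(s*(L:ℂ)), rfl, ?_, ?_⟩
  · rw [Complex.exp_neg, show -(-(s*(L:ℂ)) + -(s*(L:ℂ))) = s*L + s*L by ring,
      Complex.exp_add, ← hEd]
    field_simp
    linear_combination (-2*s*(L:ℂ))*hX
  · push_cast
    linear_combination 3*(L:ℂ)^2*hs

lemma kdv_zero_sol (lam : ℂ) (L : ℝ) : KdVSpectralODE lam L (fun _ => (0:ℂ)) := by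
  refine ⟨contDiff_const, fun x _ => ?_⟩
  simp [iteratedDeriv_succ]

lemma kdv_vanish (lam : ℂ) {L : ℝ} (hL : 0 < L) (hLN : L ∉ criticalNStar) {φ : ℝ → ℂ}
    (hφ : KdVSpectralODE lam L φ) (h0 : φ 0 = 0) (h1 : deriv φ 0 = 0) (h2 : φ L = 0)
    (h3 : iteratedDeriv 2 φ L = 0) : ∀ x ∈ Set.Icc (0:ℝ) L, φ x = 0 := by
  by_cases hc : iteratedDeriv 2 φ 0 = 0
  · intro x hx
    have hz := kdv_zero_sol lam L
    have := kdv_unique lam hL hφ hz (by simpa using h0) (by simpa using h1)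
      (by simpa [iteratedDeriv_succ] using hc)
    exact (this x hx).1
  · exfalso
    apply hLN
    obtain ⟨r₁, r₂, r₃, he1, he2, he3⟩ := cubic_roots lam
    have hroot1 : r₁^3 + r₁ + lam = 0 := root_of_elem he1 he2 he3
    have hroot2 : r₂^3 + r₂ + lam = 0 :=
      root_of_elem (r₁ := r₂) (r₂ := r₁) (r₃ := r₃) (by linear_combination he1)
        (by linear_combination he2) (by linear_combination he3)
    have hroot3 : r₃^3 + r₃ + lam = 0 :=
      root_of_elem (r₁ := r₃) (r₂ := r₁) (r₃ := r₂) (by linear_combination he1)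
        (by linear_combination he2) (by linear_combination he3)
    set c := iteratedDeriv 2 φ 0 with hcdef
    by_cases hdist : r₁ ≠ r₂ ∧ r₁ ≠ r₃ ∧ r₂ ≠ r₃
    · obtain ⟨d12, d13, d23⟩ := hdist
      set D : ℂ := (r₂-r₃)*r₁^2 + (r₃-r₁)*r₂^2 + (r₁-r₂)*r₃^2 with hDdef
      have hDne : D ≠ 0 := by
        rw [hDdef, show (r₂-r₃)*r₁^2 + (r₃-r₁)*r₂^2 + (r₁-r₂)*r₃^2
          = -((r₁-r₂)*(r₂-r₃)*(r₃-r₁)) by ring]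
        exact neg_ne_zero.mpr (mul_ne_zero (mul_ne_zero (sub_ne_zero.mpr d12)
          (sub_ne_zero.mpr d23)) (sub_ne_zero.mpr d13.symm))
      set t : ℂ := c / D with htdef
      have ht : t ≠ 0 := div_ne_zero hc hDne
      set ψ : ℝ → ℂ := sol3 (t*(r₂-r₃)) 0 r₁ (t*(r₃-r₁)) 0 r₂ (t*(r₁-r₂)) 0 r₃ with hψdef
      have hψ : KdVSpectralODE lam L ψ :=
        sol3_kdv lam L _ _ _ _ _ _ _ _ _ hroot1 hroot2 hroot3
          (by ring) (by ring) (by ring)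
      have hψ0 : ψ 0 = 0 := by
        simp only [hψdef, sol3, eSol, Complex.ofReal_zero, mul_zero, Complex.exp_zero,
          mul_one, add_zero, zero_mul]
        ring
      have hψ1 : deriv ψ 0 = 0 := by
        rw [hψdef, deriv_sol3]
        simp only [sol3, eSol, Complex.ofReal_zero, mul_zero, Complex.exp_zero,
          mul_one, add_zero, zero_mul]
        ring
      have hψ2 : iteratedDeriv 2 ψ 0 = c := by
        rw [hψdef, iteratedDeriv_two_sol3]
        simp only [sol3, eSol, Complex.ofReal_zero, mul_zero, Complex.exp_zero,
          mul_one, add_zero, zero_mul]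
        rw [htdef]
        field_simp
        ring
      have huniq := kdv_unique lam hL hφ hψ (h0.trans hψ0.symm) (h1.trans hψ1.symm)
        (hcdef ▸ hψ2.symm)
      obtain ⟨hvL, hdL⟩ := huniq L ⟨le_of_lt hL, le_refl L⟩
      have hψL : ψ L = 0 := hvL ▸ h2
      have hψ2L : iteratedDeriv 2 ψ L = 0 := hdL ▸ h3
      rw [hψdef, iteratedDeriv_two_sol3] at hψ2L
      simp only [sol3, eSol, zero_mul, mul_zero, add_zero, zero_add] at hψL hψ2L
      rw [hψdef] at hψL
      simp only [sol3, eSol, zero_mul, mul_zero, add_zero, zero_add] at hψL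
      have hE1 : (r₂-r₃) * Complex.exp (r₁*L) + (r₃-r₁) * Complex.exp (r₂*L)
          + (r₁-r₂) * Complex.exp (r₃*L) = 0 :=
        mul_left_cancel₀ ht (by rw [mul_zero]; linear_combination hψL)
      have hE2 : (r₂-r₃)*r₁^2 * Complex.exp (r₁*L) + (r₃-r₁)*r₂^2 * Complex.exp (r₂*L)
          + (r₁-r₂)*r₃^2 * Complex.exp (r₃*L) = 0 :=
        mul_left_cancel₀ ht (by rw [mul_zero]; linear_combination hψ2L)
      exact branch_distinct hL he1 he2 d12 d13 d23 hE1 hE2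
    · have hdup : r₁ = r₂ ∨ r₁ = r₃ ∨ r₂ = r₃ := by
        by_contra hcon
        push_neg at hcon
        exact hdist ⟨hcon.1, hcon.2.1, hcon.2.2⟩
      obtain ⟨sv, hs, hlam⟩ := exists_double he1 he2 he3 hdup
      have hroots : sv^3 + sv + lam = 0 := by linear_combination hlam + 3*sv*hs
      have hrootm : (-2*sv)^3 + (-2*sv) + lam = 0 := by
        linear_combination hlam + (-6*sv)*hs
      have hbcond : (-c*sv)*(3*sv^2+1) = 0 := by linear_combination (-3*c*sv)*hs
      set ψ : ℝ → ℂ := sol3 (c/3) (-c*sv) sv 0 0 sv (-c/3) 0 (-2*sv) with hψdef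
      have hψ : KdVSpectralODE lam L ψ :=
        sol3_kdv lam L _ _ _ _ _ _ _ _ _ hroots hroots hrootm hbcond (by ring) (by ring)
      have hψ0 : ψ 0 = 0 := by
        simp only [hψdef, sol3, eSol, Complex.ofReal_zero, mul_zero, Complex.exp_zero,
          mul_one, add_zero, zero_mul]
        ring
      have hψ1 : deriv ψ 0 = 0 := by
        rw [hψdef, deriv_sol3]
        simp only [sol3, eSol, Complex.ofReal_zero, mul_zero, Complex.exp_zero,
          mul_one, add_zero, zero_mul]
        ring
      have hψ2 : iteratedDeriv 2 ψ 0 = c := by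
        rw [hψdef, iteratedDeriv_two_sol3]
        simp only [sol3, eSol, Complex.ofReal_zero, mul_zero, Complex.exp_zero,
          mul_one, add_zero, zero_mul]
        linear_combination (-3*c)*hs
      have huniq := kdv_unique lam hL hφ hψ (h0.trans hψ0.symm) (h1.trans hψ1.symm)
        (hcdef ▸ hψ2.symm)
      obtain ⟨hvL, hdL⟩ := huniq L ⟨le_of_lt hL, le_refl L⟩
      have hψL : ψ L = 0 := hvL ▸ h2
      have hψ2L : iteratedDeriv 2 ψ L = 0 := hdL ▸ h3
      rw [hψdef, iteratedDeriv_two_sol3] at hψ2L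
      rw [hψdef] at hψL
      simp only [sol3, eSol, zero_mul, mul_zero, add_zero, zero_add] at hψL hψ2L
      have harg : ((-2*sv) : ℂ) * (L:ℂ) = -2*sv*(L:ℂ) := by ring
      rw [harg] at hψL hψ2L
      apply branch_repeated hL hs hc
      · linear_combination hψL
      · linear_combination hψ2L

end KdVAux

theorem stmt11 (N : ℕ) (hN : 2 ≤ N) (L : ℝ) (hL : 0 < L) (hLN : L ∉ criticalNStar)
    (lam : ℂ) (φ : Fin N → ℝ → ℂ)
    (hode : ∀ j, KdVSpectralODE lam L (φ j))
    (hb0 : ∀ j, φ j 0 = φ ⟨0, by omega⟩ 0)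
    (hb1 : (∑ j, iteratedDeriv 2 (φ j) 0) = 0)
    (hb2 : ∀ j, φ j L = 0)
    (hb3 : ∀ j, deriv (φ j) 0 = 0)
    (hb4 : ∀ j, iteratedDeriv 2 (φ j) L = 0) :
    (∀ x ∈ Set.Icc (0 : ℝ) L, (∑ j, φ j x) = 0) ↔
      (∀ j, ∀ x ∈ Set.Icc (0 : ℝ) L, φ j x = 0) := by
  constructor
  · intro hsum j
    have hz : φ ⟨0, by omega⟩ 0 = 0 := by
      have h := hsum 0 ⟨le_refl 0, le_of_lt hL⟩
      rw [Finset.sum_congr rfl (fun j _ => hb0 j)] at h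
      simp only [Finset.sum_const, Finset.card_univ, Fintype.card_fin, nsmul_eq_mul] at h
      have hNne : (N : ℂ) ≠ 0 := by
        simp only [ne_eq, Nat.cast_eq_zero]
        omega
      exact (mul_eq_zero.mp h).resolve_left hNne
    exact kdv_vanish lam hL hLN (hode j) ((hb0 j).trans hz) (hb3 j) (hb2 j) (hb4 j)
  · intro hall x hx
    exact Finset.sum_eq_zero fun j _ => hall j x hx
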